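/- Let X ∈ ℝ^{n×d}, Σ ∈ ℝ^{d×d} symmetric positive definite, σ > 0, ρ ≥ 0 with Σ − (ρ/d) X^T X ≻ 0, and define A(ρ) = (I − ρσ²(Σ − (ρ/d)X^T X)^{-1})(X^T X + dσ² I)^{-1} X^T. Then A(ρ)X − I = −dσ²(Σ − (ρ/d)X^T X)^{-1} Σ (X^T X + dσ² I)^{-1}. -/

import Mathlib

open Matrix

private lemma aux_alg (d : ℕ) (M B : Matrix (Fin d) (Fin d) ℝ) (c r : ℝ)
    (hBinv : B⁻¹ * B = 1) (hBinv' : B * B⁻¹ = 1) (hMinv : M⁻¹ * M = 1) :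
    (1 - (r * c) • M⁻¹) * B⁻¹ * (B - c • 1) - 1
    = -(c • (M⁻¹ * (M + r • (B - c • 1)) * B⁻¹)) := by
  simp only [Matrix.mul_sub, Matrix.sub_mul, Matrix.mul_add, Matrix.add_mul,
    Matrix.mul_smul, Matrix.smul_mul, Matrix.mul_one, Matrix.one_mul,
    Matrix.mul_assoc, hBinv, hBinv', hMinv, smul_smul]
  module

/-- With `A(ρ) = (I − ρσ²(Σ − (ρ/d)XᵀX)⁻¹)(XᵀX + dσ²I)⁻¹Xᵀ`,
`A(ρ)X − I = −dσ²(Σ − (ρ/d)XᵀX)⁻¹ Σ (XᵀX + dσ²I)⁻¹`. -/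
theorem stmt3 (n d : ℕ) (hd : 0 < d) (X : Matrix (Fin n) (Fin d) ℝ)
    (Sigma : Matrix (Fin d) (Fin d) ℝ) (hSig : Sigma.PosDef)
    (σ ρ : ℝ) (hσ : 0 < σ) (hρ : 0 ≤ ρ)
    (hpd : (Sigma - (ρ / (d : ℝ)) • (Xᵀ * X)).PosDef) :
    ((1 : Matrix (Fin d) (Fin d) ℝ)
        - (ρ * σ ^ 2) • (Sigma - (ρ / (d : ℝ)) • (Xᵀ * X))⁻¹)
      * (Xᵀ * X + ((d : ℝ) * σ ^ 2) • 1)⁻¹ * Xᵀ * X - 1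
    = -(((d : ℝ) * σ ^ 2) •
        ((Sigma - (ρ / (d : ℝ)) • (Xᵀ * X))⁻¹ * Sigma
          * (Xᵀ * X + ((d : ℝ) * σ ^ 2) • 1)⁻¹)) := by
  set c : ℝ := (d : ℝ) * σ ^ 2 with hc
  set M : Matrix (Fin d) (Fin d) ℝ := Sigma - (ρ / (d : ℝ)) • (Xᵀ * X) with hM
  set B : Matrix (Fin d) (Fin d) ℝ := Xᵀ * X + c • 1 with hB
  have hcpos : (0 : ℝ) < c := by positivity
  have hXX : (Xᵀ * X).PosSemidef := by
    simpa using posSemidef_conjTranspose_mul_self X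
  have hcI : ((c • 1 : Matrix (Fin d) (Fin d) ℝ)).PosDef := by
    rw [smul_one_eq_diagonal]
    exact posDef_diagonal_iff.mpr fun _ => hcpos
  have hBpd : B.PosDef := Matrix.PosDef.posSemidef_add hXX hcI
  have hBinv : B⁻¹ * B = 1 := nonsing_inv_mul B (isUnit_iff_isUnit_det _ |>.mp hBpd.isUnit)
  have hBinv' : B * B⁻¹ = 1 := mul_nonsing_inv B (isUnit_iff_isUnit_det _ |>.mp hBpd.isUnit)
  have hMinv : M⁻¹ * M = 1 := nonsing_inv_mul M (isUnit_iff_isUnit_det _ |>.mp hpd.isUnit)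
  have hXXeq : Xᵀ * X = B - c • 1 := by rw [hB]; abel
  have hSeq : Sigma = M + (ρ / (d : ℝ)) • (B - c • 1) := by
    rw [← hXXeq, hM]; abel
  have hscal : ρ * σ ^ 2 = ρ / (d : ℝ) * c := by
    rw [hc]
    field_simp
  rw [Matrix.mul_assoc (_ * B⁻¹), hXXeq, hSeq, hscal]
  exact aux_alg d M B c (ρ / (d : ℝ)) hBinv hBinv' hMinv
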